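/- Suppose a seminorm ‖·‖ on ℝ^n fails the NUNA property, i.e., there exist x ∈ ℝ^n and i ∈ {1,...,n-1} with ‖A_i x‖ > ‖x‖. Then isotonic projection is not contractive with respect to ‖·‖: there exist y, z ∈ ℝ^n with ‖iso(z) − iso(y)‖ > ‖z − y‖, where iso denotes Euclidean projection onto the cone {v : v_1 ≤ ... ≤ v_n}. -/

import Mathlib

open MeasureTheory Filter ProbabilityTheory

noncomputable section

/-- The isotonic (monotone nondecreasing) cone in `ℝ^n` with the Euclidean norm. -/
def monoCone (n : ℕ) : Set (EuclideanSpace ℝ (Fin n)) :=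
  {v | ∀ i j : Fin n, i ≤ j → v i ≤ v j}

open Classical in
/-- Euclidean projection onto the monotone cone (chosen minimizer of the distance). -/
def isoProj {n : ℕ} (x : EuclideanSpace ℝ (Fin n)) : EuclideanSpace ℝ (Fin n) :=
  if h : ∃ z ∈ monoCone n, ∀ w ∈ monoCone n, dist x z ≤ dist x w then h.choose else x

/-- The map `A_i` replacing entries `i` and `i+1` (0-based) by their common average. -/
def avgMap {n : ℕ} (i : ℕ) (x : EuclideanSpace ℝ (Fin n)) : EuclideanSpace ℝ (Fin n) :=
  WithLp.toLp 2 (fun j : Fin n => if h : i + 1 < n then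
      (if (j : ℕ) = i ∨ (j : ℕ) = i + 1
        then (x ⟨i, by omega⟩ + x ⟨i + 1, h⟩) / 2 else x j)
    else x j)

/-- One step of neighbor pooling: average entries `i`, `i+1` if they violate monotonicity. -/
def isoStep {n : ℕ} (i : ℕ) (x : EuclideanSpace ℝ (Fin n)) : EuclideanSpace ℝ (Fin n) :=
  if h : i + 1 < n then
    (if x ⟨i, by omega⟩ ≤ x ⟨i + 1, h⟩ then x else avgMap i x)
  else x

/-- Nonincreasing under neighbor averaging. -/
def NUNA {n : ℕ} (N : Seminorm ℝ (EuclideanSpace ℝ (Fin n))) : Prop :=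
  ∀ x : EuclideanSpace ℝ (Fin n), ∀ i : ℕ, i + 1 < n → N (avgMap i x) ≤ N x

/-- Average of the `m` entries of `x` starting at (0-based) index `a`. -/
def wavg {n : ℕ} (x : EuclideanSpace ℝ (Fin n)) (a m : ℕ) : ℝ :=
  (∑ t ∈ Finset.range m, if h : a + t < n then x ⟨a + t, h⟩ else 0) / m

/-- The sliding window seminorm with weight function `ψ`. -/
def swNorm {n : ℕ} (ψ : ℕ → ℝ) (x : EuclideanSpace ℝ (Fin n)) : ℝ :=
  sSup {r | ∃ a m : ℕ, 1 ≤ m ∧ a + m ≤ n ∧ r = |wavg x a m| * ψ m}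

lemma monoCone_convex (n : ℕ) : Convex ℝ (monoCone n) := by
  intro v hv w hw a b ha hb _
  intro i j hij
  have h1 : (a • v + b • w) i = a * v i + b * w i := rfl
  have h2 : (a • v + b • w) j = a * v j + b * w j := rfl
  rw [h1, h2]
  gcongr
  · exact hv i j hij
  · exact hw i j hij

lemma isoProj_eq_of_inner {n : ℕ} (x p : EuclideanSpace ℝ (Fin n)) (hp : p ∈ monoCone n)
    (H : ∀ w ∈ monoCone n, inner ℝ (x - p) (w - p) ≤ (0 : ℝ)) : isoProj x = p := by
  have bdd : BddBelow (Set.range fun w : monoCone n => ‖x - (w : EuclideanSpace ℝ (Fin n))‖) :=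
    ⟨0, by rintro _ ⟨w, rfl⟩; exact norm_nonneg _⟩
  have hp' : ‖x - p‖ = ⨅ w : monoCone n, ‖x - (w : EuclideanSpace ℝ (Fin n))‖ :=
    (norm_eq_iInf_iff_real_inner_le_zero (monoCone_convex n) hp).mpr H
  have hmin : ∀ w ∈ monoCone n, dist x p ≤ dist x w := by
    intro w hw
    rw [dist_eq_norm, dist_eq_norm, hp']
    exact ciInf_le bdd ⟨w, hw⟩
  have hex : ∃ z ∈ monoCone n, ∀ w ∈ monoCone n, dist x z ≤ dist x w := ⟨p, hp, hmin⟩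
  rw [isoProj, dif_pos hex]
  obtain ⟨hqK, hqmin⟩ := hex.choose_spec
  set q := hex.choose with hq
  haveI : Nonempty (monoCone n) := ⟨⟨p, hp⟩⟩
  have hq' : ‖x - q‖ = ⨅ w : monoCone n, ‖x - (w : EuclideanSpace ℝ (Fin n))‖ := by
    refine le_antisymm ?_ (ciInf_le bdd ⟨q, hqK⟩)
    refine le_ciInf fun w => ?_
    have := hqmin w w.2
    rwa [dist_eq_norm, dist_eq_norm] at this
  have Hq : ∀ w ∈ monoCone n, inner ℝ (x - q) (w - q) ≤ (0 : ℝ) :=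
    (norm_eq_iInf_iff_real_inner_le_zero (monoCone_convex n) hqK).mp hq'
  have h1 := H q hqK
  have h2 := Hq p hp
  have key : ‖q - p‖ ^ 2 ≤ 0 := by
    have e : (inner ℝ (x - p) (q - p) : ℝ) - inner ℝ (x - q) (q - p) = ‖q - p‖ ^ 2 := by
      rw [← inner_sub_left]
      have : (x - p) - (x - q) = q - p := by abel
      rw [this, real_inner_self_eq_norm_sq]
    have h2' : (0 : ℝ) ≤ inner ℝ (x - q) (q - p) := by
      have : (p : EuclideanSpace ℝ (Fin n)) - q = -(q - p) := by abel
      rw [this, inner_neg_right] at h2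
      linarith
    linarith [e, h1, h2']
  have : q - p = 0 := by
    have := norm_nonneg (q - p)
    have hz : ‖q - p‖ = 0 := by nlinarith
    exact norm_eq_zero.mp hz
  have := sub_eq_zero.mp this
  exact this

lemma avgMap_apply {n : ℕ} (i : ℕ) (hi : i + 1 < n) (x : EuclideanSpace ℝ (Fin n)) (j : Fin n) :
    avgMap i x j = if (j : ℕ) = i ∨ (j : ℕ) = i + 1
        then (x ⟨i, by omega⟩ + x ⟨i + 1, hi⟩) / 2 else x j := by
  simp [avgMap, dif_pos hi]

lemma avgMap_neg {n : ℕ} (i : ℕ) (x : EuclideanSpace ℝ (Fin n)) :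
    avgMap i (-x) = -(avgMap i x) := by
  ext j
  have hneg : ∀ k : Fin n, (-x) k = -(x k) := fun _ => rfl
  show avgMap i (-x) j = -(avgMap i x j)
  by_cases hi : i + 1 < n
  · rw [avgMap_apply i hi, avgMap_apply i hi]
    split_ifs <;> simp [hneg] <;> ring
  · simp [avgMap, dif_neg hi, hneg]

lemma key {n : ℕ} (x : EuclideanSpace ℝ (Fin n)) (i : ℕ) (hi : i + 1 < n)
    (hd : x ⟨i + 1, hi⟩ < x ⟨i, by omega⟩) :
    ∃ y z : EuclideanSpace ℝ (Fin n),
      z - y = x ∧ isoProj z - isoProj y = avgMap i x := by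
  set S : ℝ := ∑ j : Fin n, |x j| with hS
  have hSx : ∀ j : Fin n, |x j| ≤ S := fun j =>
    Finset.single_le_sum (fun k _ => abs_nonneg (x k)) (Finset.mem_univ j)
  have hS0 : 0 ≤ S := le_trans (abs_nonneg _) (hSx ⟨i, by omega⟩)
  set M : ℝ := 1 + 2 * S with hM
  set ax : EuclideanSpace ℝ (Fin n) := avgMap i x with haxdef
  have haxb : ∀ j : Fin n, |ax j| ≤ S := by
    intro j
    rw [haxdef, avgMap_apply i hi]
    split_ifs with hc
    · have h1 := hSx ⟨i, by omega⟩
      have h2 := hSx ⟨i + 1, hi⟩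
      rw [abs_div]
      rw [div_le_iff₀ (by norm_num : (0:ℝ) < |(2:ℝ)|)]
      calc |x ⟨i, by omega⟩ + x ⟨i+1, hi⟩| ≤ |x ⟨i, by omega⟩| + |x ⟨i+1, hi⟩| := abs_add_le _ _
        _ ≤ S * |(2:ℝ)| := by rw [abs_two]; linarith
    · exact hSx j
  set b : EuclideanSpace ℝ (Fin n) :=
    WithLp.toLp 2 (fun j : Fin n => M * ((if (j:ℕ) ≤ i then (j:ℕ) else (j:ℕ) - 1 : ℕ) : ℝ)) with hb
  have hbj : ∀ j : Fin n, b j = M * ((if (j:ℕ) ≤ i then (j:ℕ) else (j:ℕ) - 1 : ℕ) : ℝ) :=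
    fun j => rfl
  have hbmono : b ∈ monoCone n := by
    intro j k hjk
    rw [hbj, hbj]
    have : ((if (j:ℕ) ≤ i then (j:ℕ) else (j:ℕ) - 1 : ℕ) : ℝ)
        ≤ ((if (k:ℕ) ≤ i then (k:ℕ) else (k:ℕ) - 1 : ℕ) : ℝ) := by
      have hjk' : (j:ℕ) ≤ (k:ℕ) := hjk
      exact_mod_cast (by split_ifs <;> omega :
        (if (j:ℕ) ≤ i then (j:ℕ) else (j:ℕ) - 1) ≤ (if (k:ℕ) ≤ i then (k:ℕ) else (k:ℕ) - 1))
    nlinarith [this, hS0]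
  set p : EuclideanSpace ℝ (Fin n) := b + ax with hp
  have hpj : ∀ j : Fin n, p j = b j + ax j := fun j => rfl
  have hpmono : p ∈ monoCone n := by
    intro j k hjk
    rcases eq_or_lt_of_le (show (j:ℕ) ≤ (k:ℕ) from hjk) with heq | hlt
    · have : j = k := Fin.ext heq
      subst this; exact le_refl _
    by_cases hcase : (j:ℕ) = i ∧ (k:ℕ) = i + 1
    · obtain ⟨hj1, hk1⟩ := hcase
      have haxjk : ax j = ax k := by
        rw [haxdef, avgMap_apply i hi, avgMap_apply i hi,
          if_pos (Or.inl hj1), if_pos (Or.inr hk1)]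
      have hbjk : b j = b k := by
        rw [hbj, hbj]
        congr 2
        split_ifs <;> omega
      rw [hpj, hpj, haxjk, hbjk]
    · -- gap case
      have hgap : (if (j:ℕ) ≤ i then (j:ℕ) else (j:ℕ) - 1) + 1
          ≤ (if (k:ℕ) ≤ i then (k:ℕ) else (k:ℕ) - 1) := by
        have hkn : (k:ℕ) < n := k.2
        split_ifs <;> omega
      have hgap' : ((if (j:ℕ) ≤ i then (j:ℕ) else (j:ℕ) - 1 : ℕ) : ℝ) + 1
          ≤ ((if (k:ℕ) ≤ i then (k:ℕ) else (k:ℕ) - 1 : ℕ) : ℝ) := by exact_mod_cast hgap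
      have h1 := haxb j
      have h2 := haxb k
      rw [hpj, hpj, hbj, hbj]
      rw [abs_le] at h1 h2
      nlinarith [hS0, hgap']
  refine ⟨b, b + x, ?_, ?_⟩
  · abel
  · have e1 : isoProj b = b := by
      apply isoProj_eq_of_inner b b hbmono
      intro w hw
      simp
    have e2 : isoProj (b + x) = p := by
      apply isoProj_eq_of_inner (b + x) p hpmono
      intro w hw
      set d : ℝ := (x ⟨i, by omega⟩ - x ⟨i + 1, hi⟩) / 2 with hdd
      have hd0 : 0 < d := by rw [hdd]; linarith
      have hrepr : (b + x) - p = EuclideanSpace.single (⟨i, by omega⟩ : Fin n) d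
          - EuclideanSpace.single (⟨i + 1, hi⟩ : Fin n) d := by
        ext j
        have lhs : ((b + x) - p) j = x j - ax j := by
          show b j + x j - (b j + ax j) = x j - ax j; ring
        have rhs : (EuclideanSpace.single (⟨i, by omega⟩ : Fin n) d
            - EuclideanSpace.single (⟨i + 1, hi⟩ : Fin n) d) j
            = (if j = (⟨i, by omega⟩ : Fin n) then d else 0)
              - (if j = (⟨i + 1, hi⟩ : Fin n) then d else 0) := by
          show EuclideanSpace.single _ d j - EuclideanSpace.single _ d j = _
          rw [EuclideanSpace.single_apply, EuclideanSpace.single_apply]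
        show ((b + x) - p) j = _
        rw [lhs, rhs, haxdef, avgMap_apply i hi]
        rcases eq_or_ne (j:ℕ) i with hji | hji
        · rw [if_pos (Or.inl hji), if_pos (Fin.ext hji), if_neg (by
            intro hcon
            have : (j:ℕ) = i + 1 := congrArg Fin.val hcon
            omega)]
          rw [show j = (⟨i, by omega⟩ : Fin n) from Fin.ext hji, hdd]; ring
        · rcases eq_or_ne (j:ℕ) (i+1) with hji1 | hji1
          · rw [if_pos (Or.inr hji1), if_neg (by
              intro hcon; exact hji (congrArg Fin.val hcon)), if_pos (Fin.ext hji1)]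
            rw [show j = (⟨i + 1, hi⟩ : Fin n) from Fin.ext hji1, hdd]; ring
          · rw [if_neg (by tauto), if_neg (by
              intro hcon; exact hji (congrArg Fin.val hcon)), if_neg (by
              intro hcon; exact hji1 (congrArg Fin.val hcon))]
            ring
      rw [hrepr, inner_sub_left, EuclideanSpace.inner_single_left,
        EuclideanSpace.inner_single_left]
      have hpeq : p ⟨i, by omega⟩ = p ⟨i + 1, hi⟩ := by
        rw [hpj, hpj, hbj, hbj, haxdef, avgMap_apply i hi, avgMap_apply i hi,
          if_pos (Or.inl rfl), if_pos (Or.inr rfl)]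
        congr 2
        simp only [Fin.val_mk]
        rw [if_pos (le_refl i), if_neg (by omega : ¬ (i + 1 ≤ i)), Nat.add_sub_cancel]
      have hw' : w ⟨i, by omega⟩ ≤ w ⟨i + 1, hi⟩ := hw _ _ (by simp [Fin.le_def])
      have hsub1 : (w - p) ⟨i, by omega⟩ = w ⟨i, by omega⟩ - p ⟨i, by omega⟩ := rfl
      have hsub2 : (w - p) ⟨i+1, hi⟩ = w ⟨i+1, hi⟩ - p ⟨i+1, hi⟩ := rfl
      simp only [RCLike.star_def, starRingEnd_apply, star_trivial]
      rw [hsub1, hsub2, hpeq]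
      nlinarith [hd0, hw']
    rw [e1, e2, hp]
    abel

theorem stmt3 (n : ℕ) (N : Seminorm ℝ (EuclideanSpace ℝ (Fin n)))
    (x : EuclideanSpace ℝ (Fin n)) (i : ℕ) (hi : i + 1 < n)
    (h : N x < N (avgMap i x)) :
    ∃ y z : EuclideanSpace ℝ (Fin n), N (z - y) < N (isoProj z - isoProj y) := by
  rcases lt_trichotomy (x ⟨i + 1, hi⟩) (x ⟨i, by omega⟩) with hlt | heq | hgt
  · obtain ⟨y, z, hzy, hiso⟩ := key x i hi hlt
    exact ⟨y, z, by rw [hzy, hiso]; exact h⟩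
  · exfalso
    have hax : avgMap i x = x := by
      ext j
      show avgMap i x j = x j
      rw [avgMap_apply i hi]
      split_ifs with hc
      · rcases hc with hc | hc
        · rw [show j = (⟨i, by omega⟩ : Fin n) from Fin.ext hc, heq]; ring
        · rw [show j = (⟨i + 1, hi⟩ : Fin n) from Fin.ext hc, heq]; ring
      · rfl
    rw [hax] at h
    exact lt_irrefl _ h
  · have hneg : ((-x : EuclideanSpace ℝ (Fin n)) ⟨i + 1, hi⟩) < (-x) ⟨i, by omega⟩ := by
      show -(x ⟨i + 1, hi⟩) < -(x ⟨i, by omega⟩)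
      exact neg_lt_neg hgt
    obtain ⟨y, z, hzy, hiso⟩ := key (-x) i hi hneg
    refine ⟨y, z, ?_⟩
    rw [hzy, hiso, avgMap_neg, map_neg_eq_map, map_neg_eq_map]
    exact h
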